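/- Let W = W(Γ) be the right-angled Coxeter group of a simple graph Γ with word length ℓ, and let w ∈ W. For every triple (w₁, w₂, w₃) ∈ S_w there exist n_l, n_r ∈ ℕ and (u_l, u_r, t) ∈ T such that, for ρ = (n_l, n_r, u_l, u_r, t), one has |ρ| = ℓ(w) and (w₁, w₂, w₃) ∈ S_w(ρ). Together with the disjointness of the sets S_w(ρ), this shows that {S_w(ρ) : |ρ| = ℓ(w)} is a partition of S_w. -/

import Mathlib

namespace RACG

variable {V : Type*} [DecidableEq V]

/-- The right-angled Coxeter matrix of a simple graph `G`: diagonal entries are `1`,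
entries at adjacent pairs are `2` (the generators commute), and entries at distinct
non-adjacent pairs are `0` (representing `∞`, i.e. no relation). -/
def racgMatrix (G : SimpleGraph V) [DecidableRel G.Adj] : CoxeterMatrix V where
  M a b := if a = b then 1 else if G.Adj a b then 2 else 0
  isSymm := by
    refine Matrix.ext fun a b => ?_
    show (if b = a then 1 else if G.Adj b a then 2 else 0) = (if a = b then 1 else if G.Adj a b then 2 else 0)
    by_cases h : a = b
    · subst h; rfl
    · rw [if_neg h, if_neg (Ne.symm h)]
      by_cases hadj : G.Adj a b
      · rw [if_pos hadj, if_pos hadj.symm]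
      · rw [if_neg hadj, if_neg (fun h' => hadj h'.symm)]
  diagonal := fun i => by simp
  off_diagonal := fun i i' h => by
    rw [if_neg h]
    by_cases hadj : G.Adj i i' <;> simp [hadj]

variable {G : SimpleGraph V} [DecidableRel G.Adj] {W : Type*} [Group W]

/-- In the right-angled Coxeter group of `G`, the simple reflections at adjacent
vertices commute. -/
theorem simple_commute_of_adj (cs : CoxeterSystem (racgMatrix G) W) {a b : V}
    (h : G.Adj a b) : Commute (cs.simple a) (cs.simple b) := by
  have hM : (racgMatrix G) a b = 2 := by
    simp only [racgMatrix, if_neg h.ne, if_pos h]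
  have h2 := cs.simple_mul_simple_pow a b
  rw [hM, pow_two] at h2
  have h3 := mul_eq_one_iff_eq_inv.mp h2
  rwa [mul_inv_rev, cs.inv_simple, cs.inv_simple] at h3

/-- The clique word associated to a finite set `C` of pairwise adjacent vertices:
the product of the simple reflections at the vertices of `C` (in any order; these
commute). If `C` is not a clique, we set the value to `1` by convention. -/
noncomputable def cliqueWord (cs : CoxeterSystem (racgMatrix G) W) (C : Finset V) : W :=
  if h : (C : Set V).Pairwise G.Adj then
    C.noncommProd (fun v => cs.simple v)
      (fun _ ha _ hb hab => simple_commute_of_adj cs (h ha hb hab))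
  else 1

/-- `w` is a clique word if it is the product of the simple reflections over a finite
set of pairwise adjacent vertices. -/
def IsCliqueWord (cs : CoxeterSystem (racgMatrix G) W) (w : W) : Prop :=
  ∃ C : Finset V, (C : Set V).Pairwise G.Adj ∧ w = cliqueWord cs C

variable (cs : CoxeterSystem (racgMatrix G) W)

/-- The set `W̃ₙᴿ(u)` of elements `w` of length `n` such that `w·u` is reduced and
`w·u` has the same right descents as `u`. -/
def WtildeR (n : ℕ) (u : W) : Set W :=
  {w | cs.length w = n ∧ cs.length (w * u) = cs.length w + cs.length u ∧
    ∀ v : V, (cs.IsRightDescent (w * u) v ↔ cs.IsRightDescent u v)}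

/-- Membership in the set `T` of triples `(u_l, u_r, t)` such that `u_l·t` and `t·u_r`
are clique words and `u_l·t·u_r` is reduced. -/
def MemT (ul ur t : W) : Prop :=
  IsCliqueWord cs (ul * t) ∧ IsCliqueWord cs (t * ur) ∧
    cs.length (ul * t * ur) = cs.length ul + cs.length t + cs.length ur

/-- Membership in the set `S_w` of triples `(w₁, w₂, w₃)` with `w₁·w₂·w₃ = w` a reduced
expression and `w₂` a clique word. -/
def MemS (w w₁ w₂ w₃ : W) : Prop :=
  w₁ * w₂ * w₃ = w ∧ cs.length w = cs.length w₁ + cs.length w₂ + cs.length w₃ ∧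
    IsCliqueWord cs w₂

/-- Membership in the set `S_w(ρ)` for the tuple `ρ = (n_l, n_r, u_l, u_r, t)`. -/
def MemSRho (w : W) (nl nr : ℕ) (ul ur t : W) (w₁ w₂ w₃ : W) : Prop :=
  MemS cs w w₁ w₂ w₃ ∧ w₂ = t ∧
    ∃ vl ∈ WtildeR cs nl (ul * t), ∃ vr ∈ WtildeR cs nr (ur * t),
      w₁ = vl * ul ∧ w₃ = ur⁻¹ * vr⁻¹


end RACG

namespace RACGAux

open RACG List CoxeterSystem

variable {V : Type*} [DecidableEq V] {G : SimpleGraph V} [DecidableRel G.Adj]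
  {W : Type*} [Group W] (cs : CoxeterSystem (racgMatrix G) W)

lemma M_diag (a : V) : racgMatrix G a a = 1 := by simp [racgMatrix]

lemma M_adj {a b : V} (h : G.Adj a b) : racgMatrix G a b = 2 := by
  simp [racgMatrix, h.ne, h]

lemma M_nonadj {a b : V} (hne : a ≠ b) (h : ¬ G.Adj a b) : racgMatrix G a b = 0 := by
  simp [racgMatrix, hne, h]

/-! ### The abelianization-style homomorphism counting letters mod 2 -/

noncomputable def abFun : V → Multiplicative (V →₀ ZMod 2) :=
  fun v => Multiplicative.ofAdd (Finsupp.single v 1)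

lemma abFun_liftable : CoxeterMatrix.IsLiftable (racgMatrix G) (abFun (V := V)) := by
  have hsq : ∀ v : V, abFun v * abFun v = 1 := by
    intro v
    show Multiplicative.ofAdd _ * Multiplicative.ofAdd _ = 1
    rw [← ofAdd_add, ← Finsupp.single_add]
    have : (1 : ZMod 2) + 1 = 0 := by decide
    rw [this, Finsupp.single_zero, ofAdd_zero]
  intro i i'
  by_cases h : i = i'
  · subst h; rw [M_diag, pow_one, hsq]
  · by_cases hadj : G.Adj i i'
    · rw [M_adj hadj, sq, mul_mul_mul_comm, hsq, hsq, one_mul]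
    · rw [M_nonadj h hadj, pow_zero]

noncomputable def phiAb : W →* Multiplicative (V →₀ ZMod 2) :=
  cs.lift ⟨abFun, abFun_liftable⟩

lemma phiAb_simple (v : V) : phiAb cs (cs.simple v) = Multiplicative.ofAdd (Finsupp.single v 1) :=
  cs.lift_apply_simple abFun_liftable v

/-- The mod-2 support of a group element. -/
noncomputable def suppAb (w : W) : Finset V := (Multiplicative.toAdd (phiAb cs w)).support

lemma suppAb_word (ω : List V) : (suppAb cs (cs.wordProd ω)).card ≤ ω.length := by
  induction ω with
  | nil => simp [suppAb, phiAb]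
  | cons i ω ih =>
    rw [cs.wordProd_cons]
    unfold suppAb at ih ⊢
    rw [map_mul, phiAb_simple]
    calc (Multiplicative.toAdd (Multiplicative.ofAdd (Finsupp.single i (1 : ZMod 2))
            * phiAb cs (cs.wordProd ω))).support.card
        = ((Finsupp.single i (1 : ZMod 2))
            + Multiplicative.toAdd (phiAb cs (cs.wordProd ω))).support.card := rfl
      _ ≤ ((Finsupp.single i (1 : ZMod 2)).support
            ∪ (Multiplicative.toAdd (phiAb cs (cs.wordProd ω))).support).card :=
          Finset.card_le_card (Finsupp.support_add)
      _ ≤ (Finsupp.single i (1 : ZMod 2)).support.card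
            + (Multiplicative.toAdd (phiAb cs (cs.wordProd ω))).support.card :=
          Finset.card_union_le _ _
      _ ≤ 1 + (Multiplicative.toAdd (phiAb cs (cs.wordProd ω))).support.card := by
          gcongr
          exact Finset.card_le_one.mpr (fun x hx y hy => by
              rw [Finsupp.mem_support_single] at hx hy
              rw [hx.1, hy.1])
      _ ≤ 1 + ω.length := by omega
      _ = (i :: ω).length := by simp [Nat.add_comm]

lemma suppAb_le_length (w : W) : (suppAb cs w).card ≤ cs.length w := by
  obtain ⟨ω, hlen, rfl⟩ := cs.exists_reduced_word w
  calc (suppAb cs (cs.wordProd ω)).card ≤ ω.length := suppAb_word cs ω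
    _ = _ := hlen.eq.symm

lemma simple_injective : Function.Injective (cs.simple) := by
  intro a b hab
  by_contra hne
  have := congrArg (phiAb cs) hab
  rw [phiAb_simple, phiAb_simple] at this
  have h2 : Finsupp.single a (1 : ZMod 2) = Finsupp.single b 1 := by
    exact_mod_cast congrArg Multiplicative.toAdd this
  have := Finsupp.single_eq_single_iff a b 1 1 |>.mp h2
  rcases this with ⟨h, -⟩ | ⟨h, -⟩
  · exact hne h
  · exact one_ne_zero h

end RACGAux

namespace RACGAux

open RACG List CoxeterSystem

variable {V : Type*} [DecidableEq V] {G : SimpleGraph V} [DecidableRel G.Adj]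
  {W : Type*} [Group W] (cs : CoxeterSystem (racgMatrix G) W)

/-! ### Clique word basics -/

lemma cw_def {C : Finset V} (hC : (C : Set V).Pairwise G.Adj) :
    cliqueWord cs C = C.noncommProd (fun v => cs.simple v)
      (fun _ ha _ hb hab => simple_commute_of_adj cs (hC ha hb hab)) := by
  rw [cliqueWord, dif_pos hC]

lemma cw_empty : cliqueWord cs (∅ : Finset V) = 1 := by
  rw [cw_def cs (by simp)]; exact Finset.noncommProd_empty _ _

lemma cw_insert {C : Finset V} {v : V} (hv : v ∉ C)
    (hC : ((insert v C : Finset V) : Set V).Pairwise G.Adj) :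
    cliqueWord cs (insert v C) = cs.simple v * cliqueWord cs C := by
  have hC' : (C : Set V).Pairwise G.Adj := hC.mono (by intro x hx; simp at hx ⊢; tauto)
  rw [cw_def cs hC, cw_def cs hC']; exact Finset.noncommProd_insert_of_notMem _ _ _ _ hv

lemma cw_commute {C : Finset V} (hC : (C : Set V).Pairwise G.Adj) {v : V}
    (h : ∀ c ∈ C, v = c ∨ G.Adj v c) :
    Commute (cs.simple v) (cliqueWord cs C) := by
  rw [cw_def cs hC]
  apply Finset.noncommProd_commute
  intro c hc
  rcases h c hc with rfl | hadj
  · exact Commute.refl _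
  · exact simple_commute_of_adj cs hadj

lemma cw_word {C : Finset V} (hC : (C : Set V).Pairwise G.Adj) :
    ∃ l : List V, l.length = C.card ∧ cliqueWord cs C = cs.wordProd l ∧
      ∀ x, x ∈ l ↔ x ∈ C := by
  classical
  induction C using Finset.induction with
  | empty => exact ⟨[], by simp, by simp [cw_empty], by simp⟩
  | @insert v C hv ih =>
    obtain ⟨l, hlen, hprod, hmem⟩ := ih (hC.mono (by intro x hx; simp at hx ⊢; tauto))
    refine ⟨v :: l, by simp [hlen, Finset.card_insert_of_notMem hv], ?_, ?_⟩
    · rw [cw_insert cs hv hC, cs.wordProd_cons, hprod]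
    · intro x; simp [hmem]

lemma suppAb_cw {C : Finset V} (hC : (C : Set V).Pairwise G.Adj) :
    suppAb cs (cliqueWord cs C) = C := by
  classical
  induction C using Finset.induction with
  | empty => simp [cw_empty, suppAb, map_one]
  | @insert v C hv ih =>
    have hC' : (C : Set V).Pairwise G.Adj := hC.mono (by intro x hx; simp at hx ⊢; tauto)
    rw [cw_insert cs hv hC]
    unfold suppAb at ih ⊢
    rw [map_mul, phiAb_simple]
    have : Multiplicative.toAdd (Multiplicative.ofAdd (Finsupp.single v (1 : ZMod 2))
        * phiAb cs (cliqueWord cs C))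
        = Finsupp.single v (1 : ZMod 2) + Multiplicative.toAdd (phiAb cs (cliqueWord cs C)) := rfl
    rw [this, Finsupp.support_add_eq, ih hC', Finsupp.support_single_ne_zero v one_ne_zero]
    · rfl
    · rw [ih hC', Finsupp.support_single_ne_zero v one_ne_zero]
      simpa using hv

lemma cw_length {C : Finset V} (hC : (C : Set V).Pairwise G.Adj) :
    cs.length (cliqueWord cs C) = C.card := by
  obtain ⟨l, hlen, hprod, _⟩ := cw_word cs hC
  have h1 : cs.length (cliqueWord cs C) ≤ C.card := by
    rw [hprod, ← hlen]; exact cs.length_wordProd_le l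
  have h2 : C.card ≤ cs.length (cliqueWord cs C) := by
    have := suppAb_le_length cs (cliqueWord cs C)
    rwa [suppAb_cw cs hC] at this
  omega

lemma cw_mul_self {C : Finset V} (hC : (C : Set V).Pairwise G.Adj) :
    cliqueWord cs C * cliqueWord cs C = 1 := by
  classical
  induction C using Finset.induction with
  | empty => simp [cw_empty]
  | @insert v C hv ih =>
    have hC' : (C : Set V).Pairwise G.Adj := hC.mono (by intro x hx; simp at hx ⊢; tauto)
    have hcomm : Commute (cs.simple v) (cliqueWord cs C) :=
      cw_commute cs hC' (fun c hc => by
        rcases eq_or_ne v c with rfl | hne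
        · exact Or.inl rfl
        · exact Or.inr (hC (by simp) (by simp [hc]) hne))
    rw [cw_insert cs hv hC, mul_assoc, ← mul_assoc (cliqueWord cs C), ← hcomm.eq,
      mul_assoc, ih hC', mul_one, cs.simple_mul_simple_self]

lemma cw_inv {C : Finset V} (hC : (C : Set V).Pairwise G.Adj) :
    (cliqueWord cs C)⁻¹ = cliqueWord cs C :=
  inv_eq_of_mul_eq_one_right (cw_mul_self cs hC)

lemma cw_union {A C : Finset V} (hdisj : Disjoint A C)
    (hAC : ((A ∪ C : Finset V) : Set V).Pairwise G.Adj) :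
    cliqueWord cs (A ∪ C) = cliqueWord cs A * cliqueWord cs C := by
  have hA : (A : Set V).Pairwise G.Adj := hAC.mono (by intro x hx; simp at hx ⊢; tauto)
  have hC : (C : Set V).Pairwise G.Adj := hAC.mono (by intro x hx; simp at hx ⊢; tauto)
  rw [cw_def cs hAC, cw_def cs hA, cw_def cs hC]
  exact Finset.noncommProd_union_of_disjoint hdisj _ _

lemma cw_erase {C : Finset V} (hC : (C : Set V).Pairwise G.Adj) {v : V} (hv : v ∈ C) :
    cliqueWord cs C = cliqueWord cs (C.erase v) * cs.simple v := by
  have hC' : ((insert v (C.erase v) : Finset V) : Set V).Pairwise G.Adj := by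
    rw [Finset.insert_erase hv]; exact hC
  have hE : ((C.erase v : Finset V) : Set V).Pairwise G.Adj :=
    hC.mono (by intro x hx; simp at hx ⊢; tauto)
  have hcomm : Commute (cs.simple v) (cliqueWord cs (C.erase v)) :=
    cw_commute cs hE (fun c hc => by
      rcases eq_or_ne v c with rfl | hne
      · exact Or.inl rfl
      · exact Or.inr (hC hv (Finset.mem_of_mem_erase hc) hne))
  conv_lhs => rw [← Finset.insert_erase hv]
  rw [cw_insert cs (Finset.notMem_erase v C) hC', hcomm.eq]

lemma cw_mul_simple_of_mem {C : Finset V} (hC : (C : Set V).Pairwise G.Adj) {v : V}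
    (hv : v ∈ C) : cliqueWord cs C * cs.simple v = cliqueWord cs (C.erase v) := by
  rw [cw_erase cs hC hv, mul_assoc, cs.simple_mul_simple_self, mul_one]

lemma cw_descent_iff {C : Finset V} (hC : (C : Set V).Pairwise G.Adj) (v : V) :
    cs.IsRightDescent (cliqueWord cs C) v ↔ v ∈ C := by
  constructor
  · intro hd
    by_contra hv
    have hsupp : suppAb cs (cliqueWord cs C * cs.simple v) = insert v C := by
      unfold suppAb
      rw [map_mul, phiAb_simple]
      have : Multiplicative.toAdd (phiAb cs (cliqueWord cs C)
          * Multiplicative.ofAdd (Finsupp.single v (1 : ZMod 2)))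
          = Multiplicative.toAdd (phiAb cs (cliqueWord cs C))
            + Finsupp.single v (1 : ZMod 2) := rfl
      rw [this, Finsupp.support_add_eq]
      · have h1 : (Multiplicative.toAdd (phiAb cs (cliqueWord cs C))).support = C :=
          suppAb_cw cs hC
        rw [h1, Finsupp.support_single_ne_zero v one_ne_zero]
        ext x; simp [or_comm]
      · have h1 : (Multiplicative.toAdd (phiAb cs (cliqueWord cs C))).support = C :=
          suppAb_cw cs hC
        rw [h1, Finsupp.support_single_ne_zero v one_ne_zero]
        simpa using hv
    have hge : C.card + 1 ≤ cs.length (cliqueWord cs C * cs.simple v) := by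
      have := suppAb_le_length cs (cliqueWord cs C * cs.simple v)
      rwa [hsupp, Finset.card_insert_of_notMem hv] at this
    have := hd
    rw [CoxeterSystem.IsRightDescent, cw_length cs hC] at this
    omega
  · intro hv
    rw [CoxeterSystem.IsRightDescent, cw_mul_simple_of_mem cs hC hv, cw_length cs hC,
      cw_length cs (hC.mono (by intro x hx; simp at hx ⊢; tauto))]
    have : v ∈ C := hv
    rw [Finset.card_erase_of_mem hv]
    have : 0 < C.card := Finset.card_pos.mpr ⟨v, hv⟩
    omega

end RACGAux

namespace RACGAux

open RACG List CoxeterSystem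
open scoped Classical

variable {V : Type*} [DecidableEq V] {G : SimpleGraph V} [DecidableRel G.Adj]
  {W : Type*} [Group W] (cs : CoxeterSystem (racgMatrix G) W)

/-! ### The permutation representation on `W × ZMod 2` (Tits cocycle) -/

lemma conj_cancel (v : V) (t : W) :
    cs.simple v * (cs.simple v * t * cs.simple v) * cs.simple v = t := by
  rw [← mul_assoc, ← mul_assoc, cs.simple_mul_simple_self, one_mul,
    mul_assoc, cs.simple_mul_simple_self, mul_one]

lemma conj_simple_eq_simple_iff (v : V) (t : W) :
    cs.simple v * t * cs.simple v = cs.simple v ↔ t = cs.simple v := by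
  constructor
  · intro h
    have h2 : t = cs.simple v * (cs.simple v * t * cs.simple v) * cs.simple v :=
      (conj_cancel cs v t).symm
    rw [h, cs.simple_mul_simple_self, one_mul] at h2
    exact h2
  · rintro rfl
    rw [cs.simple_mul_simple_self, one_mul]

noncomputable def sigmaAux (v : V) : W × ZMod 2 → W × ZMod 2 :=
  fun p => (cs.simple v * p.1 * cs.simple v, p.2 + if p.1 = cs.simple v then 1 else 0)

lemma one_add_one_zmod2 : (1 : ZMod 2) + 1 = 0 := by decide

lemma sigmaAux_invol (v : V) : Function.Involutive (sigmaAux cs v) := by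
  intro p
  unfold sigmaAux
  have h1 := conj_cancel cs v p.1
  refine Prod.ext h1 ?_
  show p.2 + (if p.1 = cs.simple v then 1 else 0)
      + (if cs.simple v * p.1 * cs.simple v = cs.simple v then 1 else 0) = p.2
  rw [if_congr (conj_simple_eq_simple_iff cs v p.1) rfl rfl]
  by_cases h : p.1 = cs.simple v
  · rw [if_pos h, add_assoc, one_add_one_zmod2, add_zero]
  · rw [if_neg h, add_zero, add_zero]

noncomputable def sigmaFun (v : V) : Equiv.Perm (W × ZMod 2) :=
  (sigmaAux_invol cs v).toPerm

lemma sigmaFun_apply (v : V) (t : W) (e : ZMod 2) :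
    sigmaFun cs v (t, e) = (cs.simple v * t * cs.simple v,
      e + if t = cs.simple v then 1 else 0) := rfl

lemma sigmaFun_sq (v : V) : sigmaFun cs v * sigmaFun cs v = 1 := by
  ext p : 1
  rw [Equiv.Perm.mul_apply]
  exact sigmaAux_invol cs v p

lemma sigmaFun_liftable : CoxeterMatrix.IsLiftable (racgMatrix G) (sigmaFun cs) := by
  intro i i'
  by_cases h : i = i'
  · subst h; rw [M_diag, pow_one, sigmaFun_sq]
  · by_cases hadj : G.Adj i i'
    · rw [M_adj hadj, sq]
      have hcomm : Commute (cs.simple i) (cs.simple i') := simple_commute_of_adj cs hadj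
      have hii' : cs.simple i' * cs.simple i * cs.simple i' = cs.simple i := by
        rw [← hcomm.eq, mul_assoc, cs.simple_mul_simple_self, mul_one]
      have hi'i : cs.simple i * cs.simple i' * cs.simple i = cs.simple i' := by
        rw [hcomm.eq, mul_assoc, cs.simple_mul_simple_self, mul_one]
      have key : Commute (sigmaFun cs i) (sigmaFun cs i') := by
        apply Equiv.ext
        rintro ⟨t, e⟩
        show (sigmaFun cs i) ((sigmaFun cs i') (t, e))
            = (sigmaFun cs i') ((sigmaFun cs i) (t, e))
        rw [sigmaFun_apply, sigmaFun_apply, sigmaFun_apply, sigmaFun_apply]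
        have hfst : cs.simple i * (cs.simple i' * t * cs.simple i') * cs.simple i
            = cs.simple i' * (cs.simple i * t * cs.simple i) * cs.simple i' := by
          calc cs.simple i * (cs.simple i' * t * cs.simple i') * cs.simple i
              = cs.simple i * cs.simple i' * t * (cs.simple i' * cs.simple i) := by
                simp [mul_assoc]
            _ = cs.simple i' * cs.simple i * t * (cs.simple i * cs.simple i') := by
                rw [hcomm.eq]
            _ = cs.simple i' * (cs.simple i * t * cs.simple i) * cs.simple i' := by
                simp [mul_assoc]
        have hsnd1 : (cs.simple i' * t * cs.simple i' = cs.simple i) ↔ (t = cs.simple i) := by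
          constructor
          · intro hh
            have h2 : t = cs.simple i' * (cs.simple i' * t * cs.simple i') * cs.simple i' :=
              (conj_cancel cs i' t).symm
            rw [hh, hii'] at h2
            exact h2
          · rintro rfl; exact hii'
        have hsnd2 : (cs.simple i * t * cs.simple i = cs.simple i') ↔ (t = cs.simple i') := by
          constructor
          · intro hh
            have h2 : t = cs.simple i * (cs.simple i * t * cs.simple i) * cs.simple i :=
              (conj_cancel cs i t).symm
            rw [hh, hi'i] at h2
            exact h2
          · rintro rfl; exact hi'i
        refine Prod.ext hfst ?_
        show e + (if t = cs.simple i' then 1 else 0)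
            + (if cs.simple i' * t * cs.simple i' = cs.simple i then 1 else 0)
          = e + (if t = cs.simple i then 1 else 0)
            + (if cs.simple i * t * cs.simple i = cs.simple i' then 1 else 0)
        rw [if_congr hsnd1 rfl rfl, if_congr hsnd2 rfl rfl]
        ring
      calc sigmaFun cs i * sigmaFun cs i' * (sigmaFun cs i * sigmaFun cs i')
          = sigmaFun cs i * (sigmaFun cs i' * sigmaFun cs i) * sigmaFun cs i' := by
            simp [mul_assoc]
        _ = sigmaFun cs i * (sigmaFun cs i * sigmaFun cs i') * sigmaFun cs i' := by
            rw [key.eq]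
        _ = 1 := by
            rw [← mul_assoc, mul_assoc (sigmaFun cs i * sigmaFun cs i)]
            rw [sigmaFun_sq, sigmaFun_sq, one_mul]
    · rw [M_nonadj h hadj, pow_zero]

noncomputable def phiPerm : W →* Equiv.Perm (W × ZMod 2) :=
  cs.lift ⟨sigmaFun cs, sigmaFun_liftable cs⟩

lemma phiPerm_simple (v : V) : phiPerm cs (cs.simple v) = sigmaFun cs v :=
  cs.lift_apply_simple (sigmaFun_liftable cs) v

/-- Mod 2 count of occurrences in a list. -/
noncomputable def cnt (t : W) : List W → ZMod 2
  | [] => 0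
  | x :: l => (if x = t then 1 else 0) + cnt t l

lemma cnt_one_mem {t : W} : ∀ {l : List W}, cnt t l = 1 → t ∈ l := by
  intro l
  induction l with
  | nil => intro h; exact absurd h (by rw [cnt]; decide)
  | cons x l ih =>
    intro h
    rw [cnt] at h
    by_cases hx : x = t
    · rw [hx]; exact List.mem_cons_self
    · rw [if_neg hx, zero_add] at h
      exact List.mem_cons_of_mem _ (ih h)

lemma phiPerm_word (ω : List V) (t : W) (e : ZMod 2) :
    phiPerm cs (cs.wordProd ω) (t, e)
      = (cs.wordProd ω * t * (cs.wordProd ω)⁻¹, e + cnt t (cs.rightInvSeq ω)) := by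
  induction ω generalizing t e with
  | nil => simp [cs.wordProd_nil, cnt]
  | cons i ω ih =>
    rw [cs.wordProd_cons, map_mul, phiPerm_simple]
    have hris : cs.rightInvSeq (i :: ω)
        = ((cs.wordProd ω)⁻¹ * cs.simple i * cs.wordProd ω) :: cs.rightInvSeq ω := rfl
    rw [hris, cnt]
    show sigmaFun cs i (phiPerm cs (cs.wordProd ω) (t, e)) = _
    rw [ih, sigmaFun_apply]
    have hfst : cs.simple i * (cs.wordProd ω * t * (cs.wordProd ω)⁻¹) * cs.simple i
        = cs.simple i * cs.wordProd ω * t * (cs.simple i * cs.wordProd ω)⁻¹ := by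
      rw [mul_inv_rev, cs.inv_simple]; simp [mul_assoc]
    have hcond : (cs.wordProd ω * t * (cs.wordProd ω)⁻¹ = cs.simple i)
        ↔ ((cs.wordProd ω)⁻¹ * cs.simple i * cs.wordProd ω = t) := by
      constructor
      · intro hh; rw [← hh]; group
      · intro hh; rw [← hh]; group
    refine Prod.ext hfst ?_
    show e + cnt t (cs.rightInvSeq ω)
        + (if cs.wordProd ω * t * (cs.wordProd ω)⁻¹ = cs.simple i then 1 else 0)
      = e + ((if (cs.wordProd ω)⁻¹ * cs.simple i * cs.wordProd ω = t then 1 else 0)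
          + cnt t (cs.rightInvSeq ω))
    rw [if_congr hcond rfl rfl]
    ring

/-- The Tits cocycle. -/
noncomputable def nu (w t : W) : ZMod 2 := (phiPerm cs w (t, 0)).2

lemma nu_word (ω : List V) (t : W) :
    nu cs (cs.wordProd ω) t = cnt t (cs.rightInvSeq ω) := by
  rw [nu, phiPerm_word]; simp

lemma phiPerm_apply (u t : W) (e : ZMod 2) :
    phiPerm cs u (t, e) = (u * t * u⁻¹, e + nu cs u t) := by
  obtain ⟨ω, rfl⟩ := cs.wordProd_surjective u
  rw [phiPerm_word, nu_word]

lemma nu_one_exchange {u t : W} (hnu : nu cs u t = 1) {ω : List V}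
    (hred : ω.length = cs.length u) (hw : u = cs.wordProd ω) :
    ∃ j, j < ω.length ∧ u * t = cs.wordProd (ω.eraseIdx j) := by
  subst hw
  rw [nu_word] at hnu
  have hmem : t ∈ cs.rightInvSeq ω := cnt_one_mem hnu
  obtain ⟨j, hj, hjt⟩ := List.getElem_of_mem hmem
  have hjlen : j < ω.length := by
    have := cs.length_rightInvSeq ω
    omega
  refine ⟨j, hjlen, ?_⟩
  have hgetD : (cs.rightInvSeq ω).getD j 1 = t := by
    rw [List.getD_eq_getElem _ _ hj, hjt]
  rw [← hgetD]
  exact cs.wordProd_mul_getD_rightInvSeq ω j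

lemma nu_one_lt {u t : W} (hnu : nu cs u t = 1) : cs.length (u * t) < cs.length u := by
  obtain ⟨ω, hlen, hw⟩ := cs.exists_reduced_word u
  replace hlen : ω.length = cs.length u := by rw [hw]; exact hlen.eq.symm
  obtain ⟨j, hj, hprod⟩ := nu_one_exchange cs hnu hlen hw
  rw [hprod]
  have h1 : (ω.eraseIdx j).length + 1 = ω.length := List.length_eraseIdx_add_one hj
  have h2 := cs.length_wordProd_le (ω.eraseIdx j)
  omega

lemma nu_mul (w u t : W) : nu cs (w * u) t = nu cs u t + nu cs w (u * t * u⁻¹) := by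
  have h : phiPerm cs (w * u) (t, 0) = phiPerm cs w (phiPerm cs u (t, 0)) := by
    rw [map_mul]; rfl
  rw [nu, h, phiPerm_apply, phiPerm_apply]
  simp

lemma nu_reflection_self {t : W} (ht : cs.IsReflection t) : nu cs t t = 1 := by
  obtain ⟨u, i, rfl⟩ := ht
  set t := u * cs.simple i * u⁻¹ with hT
  have h1 : phiPerm cs u (cs.simple i, 0) = (t, nu cs u (cs.simple i)) := by
    rw [phiPerm_apply]; rw [hT]; simp
  have h2 : phiPerm cs u⁻¹ (t, nu cs u (cs.simple i)) = (cs.simple i, 0) := by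
    have h3 := congrArg (phiPerm cs u⁻¹) h1
    rw [← Equiv.Perm.mul_apply, ← map_mul, inv_mul_cancel, map_one] at h3
    simpa using h3.symm
  have hzero : nu cs u (cs.simple i) + nu cs u⁻¹ t = 0 := by
    have h4 := congrArg Prod.snd h2
    rw [phiPerm_apply] at h4
    simpa [add_comm] using h4
  have h2' : phiPerm cs u⁻¹ (t, 0) = (cs.simple i, nu cs u⁻¹ t) := by
    rw [phiPerm_apply]
    refine Prod.ext ?_ (by simp)
    show u⁻¹ * t * u⁻¹⁻¹ = cs.simple i
    rw [hT]; group
  have h5 : phiPerm cs (cs.simple i) (cs.simple i, nu cs u⁻¹ t)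
      = (cs.simple i, nu cs u⁻¹ t + 1) := by
    rw [phiPerm_simple, sigmaFun_apply, if_pos rfl, cs.simple_mul_simple_self, one_mul]
  have h6 : phiPerm cs t (t, 0)
      = phiPerm cs u (phiPerm cs (cs.simple i) (phiPerm cs u⁻¹ (t, 0))) := by
    rw [← Equiv.Perm.mul_apply, ← Equiv.Perm.mul_apply, ← map_mul, ← map_mul, hT]
  rw [nu, h6, h2', h5, phiPerm_apply]
  show nu cs u⁻¹ t + 1 + nu cs u (cs.simple i) = 1
  have : nu cs u⁻¹ t + 1 + nu cs u (cs.simple i)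
      = (nu cs u (cs.simple i) + nu cs u⁻¹ t) + 1 := by ring
  rw [this, hzero, zero_add]

lemma descent_nu {u t : W} (ht : cs.IsReflection t) (hlt : cs.length (u * t) < cs.length u) :
    nu cs u t = 1 := by
  by_contra hne
  have h01 : ∀ x : ZMod 2, x = 0 ∨ x = 1 := by decide
  have h0 : nu cs u t = 0 := (h01 _).resolve_right hne
  have hutt : u * t * t = u := by rw [mul_assoc, ht.mul_self, mul_one]
  have hh : nu cs (u * t) t = 1 := by
    have h7 := nu_mul cs u t t
    rw [show t * t * t⁻¹ = t by group] at h7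
    rw [h7, nu_reflection_self cs ht, h0, add_zero]
  have := nu_one_lt cs hh
  rw [hutt] at this
  omega

lemma descent_iff_nu {u t : W} (ht : cs.IsReflection t) :
    cs.length (u * t) < cs.length u ↔ nu cs u t = 1 :=
  ⟨descent_nu cs ht, nu_one_lt cs⟩

/-- The exchange property. -/
lemma exchange {u : W} {b : V} (hd : cs.IsRightDescent u b) {ω : List V}
    (hred : ω.length = cs.length u) (hw : u = cs.wordProd ω) :
    ∃ j, j < ω.length ∧ u * cs.simple b = cs.wordProd (ω.eraseIdx j) :=
  nu_one_exchange cs (descent_nu cs (cs.isReflection_simple b) hd) hred hw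

end RACGAux

namespace RACGAux

open RACG List CoxeterSystem
open scoped Classical

variable {V : Type*} [DecidableEq V] {G : SimpleGraph V} [DecidableRel G.Adj]
  {W : Type*} [Group W] (cs : CoxeterSystem (racgMatrix G) W)

lemma descent_length {u : W} {v : V} (hd : cs.IsRightDescent u v) :
    cs.length (u * cs.simple v) + 1 = cs.length u := by
  rcases cs.length_mul_simple u v with h | h
  · exfalso; rw [CoxeterSystem.IsRightDescent] at hd; omega
  · exact h

lemma not_descent_length {u : W} {v : V} (hd : ¬ cs.IsRightDescent u v) :
    cs.length (u * cs.simple v) = cs.length u + 1 := by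
  rcases cs.length_mul_simple u v with h | h
  · exact h
  · exfalso; rw [CoxeterSystem.IsRightDescent] at hd; omega

/-- A reduced word for `u` ending in the letter `a`, when `a` is a right descent. -/
lemma reduced_word_ending {u : W} {a : V} (ha : cs.IsRightDescent u a) :
    ∃ τ : List V, τ.length + 1 = cs.length u ∧ u = cs.wordProd (τ ++ [a]) := by
  obtain ⟨τ, hlen, hτ⟩ := cs.exists_reduced_word (u * cs.simple a)
  refine ⟨τ, by rw [← hlen.eq, ← hτ]; exact descent_length cs ha, ?_⟩
  rw [cs.wordProd_append, ← hτ, cs.wordProd_singleton, mul_assoc,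
    cs.simple_mul_simple_self, mul_one]

/-- If `a ≠ b` are both right descents of `u`, then `ℓ(u s_b s_a) = ℓ(u) - 2`. -/
lemma two_descents {u : W} {a b : V} (hab : a ≠ b) (ha : cs.IsRightDescent u a)
    (hb : cs.IsRightDescent u b) :
    cs.length (u * cs.simple b * cs.simple a) + 2 = cs.length u := by
  obtain ⟨τ, hτlen, hτ⟩ := reduced_word_ending cs ha
  have hωlen : (τ ++ [a]).length = cs.length u := by simp; omega
  obtain ⟨j, hj, hex⟩ := exchange cs hb hωlen hτ
  rcases Nat.lt_or_ge j τ.length with hjτ | hjτ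
  · -- erased within τ
    rw [List.eraseIdx_append_of_lt_length hjτ] at hex
    rw [cs.wordProd_append, cs.wordProd_singleton] at hex
    have h1 : u * cs.simple b * cs.simple a = cs.wordProd (τ.eraseIdx j) := by
      rw [hex, mul_assoc, cs.simple_mul_simple_self, mul_one]
    have h2 := cs.length_wordProd_le (τ.eraseIdx j)
    have h3 : (τ.eraseIdx j).length + 1 = τ.length := List.length_eraseIdx_add_one hjτ
    -- lower bound
    have h4 := cs.length_mul_simple (u * cs.simple b) a
    have h5 := descent_length cs hb
    rw [h1] at h4 ⊢
    omega
  · -- erased the final letter: contradiction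
    exfalso
    have hj' : j = τ.length := by simp at hj; omega
    subst hj'
    have herase : (τ ++ [a]).eraseIdx τ.length = τ := by
      rw [List.eraseIdx_append_of_length_le le_rfl, Nat.sub_self]
      simp
    rw [herase] at hex
    have hua : u * cs.simple a = cs.wordProd τ := by
      rw [hτ, cs.wordProd_append, cs.wordProd_singleton, mul_assoc,
        cs.simple_mul_simple_self, mul_one]
    have : cs.simple b = cs.simple a := by
      have := hex.trans hua.symm
      exact mul_left_cancel this
    exact hab (simple_injective cs this.symm)

end RACGAux

namespace RACGAux

open RACG List CoxeterSystem
open scoped Classical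

variable {V : Type*} [DecidableEq V] {G : SimpleGraph V} [DecidableRel G.Adj]
  {W : Type*} [Group W] (cs : CoxeterSystem (racgMatrix G) W)

/-! ### Alternating words in two non-adjacent letters -/

/-- `m` is an alternating word in the letters `a` and `b`. -/
def IsAlt (a b : V) (m : List V) : Prop :=
  m.Chain' (· ≠ ·) ∧ ∀ x ∈ m, x = a ∨ x = b

lemma lengthParity_wordProd (ω : List V) :
    cs.lengthParity (cs.wordProd ω) = Multiplicative.ofAdd (ω.length : ZMod 2) := by
  induction ω with
  | nil => simp [cs.wordProd_nil]
  | cons i ω ih =>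
    rw [cs.wordProd_cons, map_mul, cs.lengthParity_simple, ih, ← ofAdd_add]
    congr 1
    rw [List.length_cons]
    push_cast
    ring

section Dihedral

variable {a b : V} (hab : a ≠ b) (hnadj : ¬ G.Adj a b)

noncomputable def rFun (a b : V) : V → Equiv.Perm ℤ := fun v =>
  if v = a then Equiv.neg ℤ
  else if v = b then (Equiv.neg ℤ).trans (Equiv.addLeft 1)
  else 1

lemma rFun_sq (v : V) : rFun a b v * rFun a b v = 1 := by
  unfold rFun
  split_ifs
  · ext x : 1
    simp [Equiv.Perm.mul_apply]
  · ext x : 1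
    simp [Equiv.Perm.mul_apply, Equiv.trans_apply]
  · rw [one_mul]

include hab hnadj in
lemma rFun_liftable : CoxeterMatrix.IsLiftable (racgMatrix G) (rFun a b) := by
  intro i i'
  by_cases h : i = i'
  · subst h; rw [M_diag, pow_one, rFun_sq]
  · by_cases hadj : G.Adj i i'
    · rw [M_adj hadj, sq]
      have hone : rFun a b i = 1 ∨ rFun a b i' = 1 := by
        by_contra hcon
        push_neg at hcon
        obtain ⟨h1, h2⟩ := hcon
        have hi : i = a ∨ i = b := by
          unfold rFun at h1; split_ifs at h1 with u1 u2
          · exact Or.inl u1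
          · exact Or.inr u2
          · exact absurd rfl h1
        have hi' : i' = a ∨ i' = b := by
          unfold rFun at h2; split_ifs at h2 with u1 u2
          · exact Or.inl u1
          · exact Or.inr u2
          · exact absurd rfl h2
        rcases hi with rfl | rfl <;> rcases hi' with rfl | rfl
        · exact h rfl
        · exact hnadj hadj
        · exact hnadj hadj.symm
        · exact h rfl
      rcases hone with h1 | h1
      · rw [h1, one_mul, rFun_sq]
      · rw [h1, mul_one, rFun_sq]
    · rw [M_nonadj h hadj, pow_zero]

variable (a b) in
noncomputable def rHom (hab : a ≠ b) (hnadj : ¬ G.Adj a b) : W →* Equiv.Perm ℤ :=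
  cs.lift ⟨rFun a b, rFun_liftable hab hnadj⟩

lemma rHom_simple (v : V) : rHom cs a b hab hnadj (cs.simple v) = rFun a b v :=
  cs.lift_apply_simple _ v

lemma rHom_a : rHom cs a b hab hnadj (cs.simple a) = Equiv.neg ℤ := by
  rw [rHom_simple, rFun, if_pos rfl]

lemma rHom_b : rHom cs a b hab hnadj (cs.simple b) = (Equiv.neg ℤ).trans (Equiv.addLeft 1) := by
  rw [rHom_simple, rFun, if_neg (Ne.symm hab), if_pos rfl]

/-- The value of the dihedral homomorphism at `0` on an alternating word. -/
lemma alt_val : ∀ (m : List V), IsAlt a b m →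
    (rHom cs a b hab hnadj (cs.wordProd m)) 0
      = (if m.head? = some a then -((m.length / 2 : ℕ) : ℤ)
         else if m.head? = some b then (((m.length + 1) / 2 : ℕ) : ℤ) else 0) := by
  intro m
  induction m with
  | nil => simp [cs.wordProd_nil]
  | cons u m ih =>
    intro halt
    have hm : IsAlt a b m := ⟨halt.1.tail, fun x hx => halt.2 x (List.mem_cons_of_mem _ hx)⟩
    have hprev := ih hm
    rw [cs.wordProd_cons, map_mul, Equiv.Perm.mul_apply, hprev]
    rcases halt.2 u (List.mem_cons_self) with h1 | h1 <;> subst h1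
    · rw [rHom_a]
      cases m with
      | nil => simp
      | cons y t =>
        have hyu : u ≠ y := (List.isChain_cons_cons.mp halt.1).1
        have hyb : y = b := by
          rcases hm.2 y (List.mem_cons_self) with h2 | h2
          · exact absurd h2.symm hyu
          · exact h2
        subst hyb
        rw [List.head?_cons, List.head?_cons,
          if_neg (by simpa using Ne.symm hab), if_pos rfl, if_pos rfl, Equiv.neg_apply]
        rw [List.length_cons, List.length_cons, List.length_cons]
    · rw [rHom_b]
      cases m with
      | nil =>
        rw [List.head?_nil, List.head?_cons]
        rw [if_neg (by simp), if_neg (by simp), if_neg (by simpa using Ne.symm hab),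
          if_pos rfl]
        simp [Equiv.trans_apply]
      | cons y t =>
        have hyu : u ≠ y := (List.isChain_cons_cons.mp halt.1).1
        have hya : y = a := by
          rcases hm.2 y (List.mem_cons_self) with h2 | h2
          · exact h2
          · exact absurd h2.symm hyu
        subst hya
        rw [List.head?_cons, List.head?_cons, if_pos rfl,
          if_neg (by simpa using Ne.symm hab), if_pos rfl]
        rw [Equiv.trans_apply, Equiv.neg_apply, List.length_cons, List.length_cons,
          List.length_cons]
        have hl : (t.length + 1 + 1 + 1) / 2 = (t.length + 1) / 2 + 1 := by omega
        rw [hl]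
        push_cast
        simp [Equiv.coe_addLeft]
        ring

include hab hnadj in
/-- Two alternating words in non-adjacent distinct letters with the same product
have the same length. -/
lemma alt_length_eq {m m' : List V} (hm : IsAlt a b m) (hm' : IsAlt a b m')
    (hprod : cs.wordProd m = cs.wordProd m') : m.length = m'.length := by
  have hpar : (m.length : ZMod 2) = (m'.length : ZMod 2) := by
    have := congrArg cs.lengthParity hprod
    rw [lengthParity_wordProd, lengthParity_wordProd] at this
    exact_mod_cast congrArg Multiplicative.toAdd this
  have hpar2 : m.length % 2 = m'.length % 2 := by
    rwa [ZMod.natCast_eq_natCast_iff, Nat.ModEq] at hpar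
  have hval : (rHom cs a b hab hnadj (cs.wordProd m)) 0
      = (rHom cs a b hab hnadj (cs.wordProd m')) 0 := by rw [hprod]
  rw [alt_val cs hab hnadj m hm, alt_val cs hab hnadj m' hm'] at hval
  rcases m with - | ⟨x, t⟩
  · rcases m' with - | ⟨x', t'⟩
    · rfl
    · exfalso
      rcases hm'.2 x' (List.mem_cons_self) with h2 | h2 <;> subst h2
      · rw [List.head?_nil, List.head?_cons, if_neg (by simp), if_neg (by simp),
          if_pos rfl, List.length_cons] at hval
        rw [List.length_nil, List.length_cons] at hpar2
        omega
      · rw [List.head?_nil, List.head?_cons, if_neg (by simp), if_neg (by simp),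
          if_neg (by simpa using Ne.symm hab), if_pos rfl, List.length_cons] at hval
        omega
  · rcases m' with - | ⟨x', t'⟩
    · exfalso
      rcases hm.2 x (List.mem_cons_self) with h2 | h2 <;> subst h2
      · rw [List.head?_cons, List.head?_nil, if_pos rfl, if_neg (by simp),
          if_neg (by simp), List.length_cons] at hval
        rw [List.length_nil, List.length_cons] at hpar2
        omega
      · rw [List.head?_cons, List.head?_nil, if_neg (by simpa using Ne.symm hab),
          if_pos rfl, if_neg (by simp), if_neg (by simp), List.length_cons] at hval
        omega
    · rw [List.length_cons, List.length_cons] at hpar2 ⊢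
      rcases hm.2 x (List.mem_cons_self) with h1 | h1 <;>
        rcases hm'.2 x' (List.mem_cons_self) with h2 | h2 <;>
        subst h1 <;> subst h2
      · rw [List.head?_cons, List.head?_cons, if_pos rfl, if_pos rfl,
          List.length_cons, List.length_cons] at hval
        omega
      · rw [List.head?_cons, List.head?_cons, if_pos rfl,
          if_neg (by simpa using Ne.symm hab), if_pos rfl,
          List.length_cons, List.length_cons] at hval
        omega
      · rw [List.head?_cons, List.head?_cons, if_neg (by simpa using Ne.symm hab),
          if_pos rfl, if_pos rfl, List.length_cons, List.length_cons] at hval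
        omega
      · rw [List.head?_cons, List.head?_cons, if_neg (by simpa using Ne.symm hab),
          if_pos rfl, if_neg (by simpa using Ne.symm hab), if_pos rfl,
          List.length_cons, List.length_cons] at hval
        omega

end Dihedral

/-! ### Reduction of a word to an alternating-compatible form (cancel equal neighbours) -/

def redStep (x : V) : List V → List V
  | [] => [x]
  | y :: t => if x = y then t else x :: y :: t

def red : List V → List V
  | [] => []
  | x :: l => redStep x (red l)

@[simp] lemma red_nil : red ([] : List V) = [] := rfl

@[simp] lemma red_cons (x : V) (l : List V) : red (x :: l) = redStep x (red l) := rfl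

@[simp] lemma redStep_nil (x : V) : redStep x ([] : List V) = [x] := rfl

@[simp] lemma redStep_cons (x y : V) (t : List V) :
    redStep x (y :: t) = if x = y then t else x :: y :: t := rfl

lemma red_wordProd (l : List V) : cs.wordProd (red l) = cs.wordProd l := by
  induction l with
  | nil => rfl
  | cons x l ih =>
    rw [cs.wordProd_cons, ← ih, red_cons]
    cases h : red l with
    | nil => simp
    | cons y t =>
      rw [redStep_cons]
      by_cases hxy : x = y
      · subst hxy
        rw [if_pos rfl, cs.wordProd_cons, ← mul_assoc, cs.simple_mul_simple_self, one_mul]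
      · rw [if_neg hxy, cs.wordProd_cons]

lemma red_chain' (l : List V) : (red l).Chain' (· ≠ ·) := by
  induction l with
  | nil => simp [List.Chain']
  | cons x l ih =>
    rw [red_cons]
    cases h : red l with
    | nil => simp [List.Chain']
    | cons y t =>
      rw [h] at ih
      rw [redStep_cons]
      by_cases hxy : x = y
      · rw [if_pos hxy]
        exact ih.tail
      · rw [if_neg hxy]
        exact List.isChain_cons_cons.mpr ⟨hxy, ih⟩

lemma red_mem {z : V} : ∀ {l : List V}, z ∈ red l → z ∈ l := by
  intro l
  induction l with
  | nil => simp
  | cons x l ih =>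
    intro hz
    rw [red_cons] at hz
    cases h : red l with
    | nil =>
      rw [h, redStep_nil] at hz
      simp at hz
      simp [hz]
    | cons y t =>
      rw [h, redStep_cons] at hz
      by_cases hxy : x = y
      · rw [if_pos hxy] at hz
        have : z ∈ red l := by rw [h]; exact List.mem_cons_of_mem _ hz
        exact List.mem_cons_of_mem _ (ih this)
      · rw [if_neg hxy] at hz
        rcases List.mem_cons.mp hz with rfl | hz''
        · exact List.mem_cons_self
        · have : z ∈ red l := by rw [h]; exact hz''
          exact List.mem_cons_of_mem _ (ih this)

lemma red_length_le (l : List V) : (red l).length ≤ l.length := by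
  induction l with
  | nil => simp
  | cons x l ih =>
    rw [red_cons]
    cases h : red l with
    | nil => simp
    | cons y t =>
      rw [h] at ih
      rw [redStep_cons]
      by_cases hxy : x = y
      · rw [if_pos hxy]
        rw [List.length_cons] at ih
        simp
        omega
      · rw [if_neg hxy]
        rw [List.length_cons] at ih
        simp at ih ⊢
        omega

lemma red_isAlt {a b : V} {l : List V} (hl : ∀ x ∈ l, x = a ∨ x = b) :
    IsAlt a b (red l) :=
  ⟨red_chain' l, fun x hx => hl x (red_mem hx)⟩

end RACGAux

namespace RACGAux

open RACG List CoxeterSystem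
open scoped Classical

variable {V : Type*} [DecidableEq V] {G : SimpleGraph V} [DecidableRel G.Adj]
  {W : Type*} [Group W] (cs : CoxeterSystem (racgMatrix G) W)

/-- Greedy stripping of `a`/`b` descents. -/
lemma strip (a b : V) : ∀ n (w : W), cs.length w = n →
    ∃ (z : W) (d : List V), (∀ x ∈ d, x = a ∨ x = b) ∧ w = z * cs.wordProd d ∧
      cs.length w = cs.length z + d.length ∧
      ¬ cs.IsRightDescent z a ∧ ¬ cs.IsRightDescent z b := by
  intro n
  induction n using Nat.strong_induction_on with
  | _ n IH =>
    intro w hw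
    by_cases ha : cs.IsRightDescent w a
    · have hlen := descent_length cs ha
      obtain ⟨z, d, hmem, hdef, hzlen, hza, hzb⟩ :=
        IH (cs.length (w * cs.simple a)) (by omega) (w * cs.simple a) rfl
      refine ⟨z, d ++ [a], ?_, ?_, ?_, hza, hzb⟩
      · intro x hx
        rcases List.mem_append.mp hx with hx | hx
        · exact hmem x hx
        · simp at hx; exact Or.inl hx
      · rw [cs.wordProd_append, cs.wordProd_singleton, ← mul_assoc, ← hdef,
          mul_assoc, cs.simple_mul_simple_self, mul_one]
      · rw [List.length_append, List.length_singleton]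
        omega
    · by_cases hb : cs.IsRightDescent w b
      · have hlen := descent_length cs hb
        obtain ⟨z, d, hmem, hdef, hzlen, hza, hzb⟩ :=
          IH (cs.length (w * cs.simple b)) (by omega) (w * cs.simple b) rfl
        refine ⟨z, d ++ [b], ?_, ?_, ?_, hza, hzb⟩
        · intro x hx
          rcases List.mem_append.mp hx with hx | hx
          · exact hmem x hx
          · simp at hx; exact Or.inr hx
        · rw [cs.wordProd_append, cs.wordProd_singleton, ← mul_assoc, ← hdef,
            mul_assoc, cs.simple_mul_simple_self, mul_one]
        · rw [List.length_append, List.length_singleton]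
          omega
      · exact ⟨w, [], by simp, by simp, by simp, ha, hb⟩

/-- Key additivity: multiplying an element with no `a`/`b` descents by an
alternating word in non-adjacent `a, b` adds lengths. -/
lemma alt_add {a b : V} (hab : a ≠ b) (hnadj : ¬ G.Adj a b) :
    ∀ n (y : W), cs.length y = n →
      ¬ cs.IsRightDescent y a → ¬ cs.IsRightDescent y b →
      ∀ m, IsAlt a b m → cs.length (y * cs.wordProd m) = cs.length y + m.length := by
  intro n
  induction n using Nat.strong_induction_on with
  | _ n IH =>
    intro y hy hda hdb m
    induction m using List.reverseRecOn with
    | nil => simp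
    | append_singleton m' c ihm =>
      intro halt
      have hm' : IsAlt a b m' :=
        ⟨(List.isChain_append.mp halt.1).1, fun x hx => halt.2 x (by simp [hx])⟩
      have h1 : cs.length (y * cs.wordProd m') = cs.length y + m'.length := ihm hm'
      have hc : c = a ∨ c = b := halt.2 c (by simp)
      rw [cs.wordProd_append, cs.wordProd_singleton, ← mul_assoc, List.length_append,
        List.length_singleton]
      by_contra hne
      have hdesc : cs.IsRightDescent (y * cs.wordProd m') c := by
        rcases cs.length_mul_simple (y * cs.wordProd m') c with h | h
        · exact absurd (by omega) hne
        · rw [CoxeterSystem.IsRightDescent]; omega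
      obtain ⟨ωy, hωylen, hωy⟩ := cs.exists_reduced_word y
      replace hωylen : ωy.length = cs.length y := by rw [hωy]; exact hωylen.eq.symm
      have hΩlen : (ωy ++ m').length = cs.length (y * cs.wordProd m') := by
        rw [List.length_append, hωylen, h1]
      have hΩprod : y * cs.wordProd m' = cs.wordProd (ωy ++ m') := by
        rw [cs.wordProd_append, ← hωy]
      obtain ⟨j, hj, hex⟩ := exchange cs hdesc hΩlen hΩprod
      rcases Nat.lt_or_ge j ωy.length with hjy | hjy
      · -- deletion inside the word for y
        rw [List.eraseIdx_append_of_lt_length hjy, cs.wordProd_append] at hex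
        have hy₂len : cs.length (cs.wordProd (ωy.eraseIdx j)) + 1 ≤ n := by
          have h2 := cs.length_wordProd_le (ωy.eraseIdx j)
          have h3 := List.length_eraseIdx_add_one hjy
          omega
        obtain ⟨z, d, hdmem, hzdef, hzlen, hza, hzb⟩ :=
          strip cs a b (cs.length (cs.wordProd (ωy.eraseIdx j))) (cs.wordProd (ωy.eraseIdx j)) rfl
        have hzlt : cs.length z < n := by omega
        set L := d ++ m' ++ [c] ++ m'.reverse with hL
        have hLmem : ∀ x ∈ L, x = a ∨ x = b := by
          intro x hx
          rw [hL] at hx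
          rcases List.mem_append.mp hx with hx | hx
          · rcases List.mem_append.mp hx with hx | hx
            · rcases List.mem_append.mp hx with hx | hx
              · exact hdmem x hx
              · exact hm'.2 x hx
            · simp at hx; subst hx; exact hc
          · exact hm'.2 x (List.mem_reverse.mp hx)
        have hm₀ : IsAlt a b (red L) := red_isAlt hLmem
        have hym₀ : y = z * cs.wordProd (red L) := by
          rw [red_wordProd, hL]
          rw [cs.wordProd_append, cs.wordProd_append, cs.wordProd_append,
            cs.wordProd_singleton, cs.wordProd_reverse]
          have hzd : z * cs.wordProd d = cs.wordProd (ωy.eraseIdx j) := hzdef.symm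
          have hy₂m : cs.wordProd (ωy.eraseIdx j) * cs.wordProd m'
              = y * cs.wordProd m' * cs.simple c := hex.symm
          symm
          calc z * (cs.wordProd d * cs.wordProd m' * cs.simple c * (cs.wordProd m')⁻¹)
              = (z * cs.wordProd d) * cs.wordProd m' * cs.simple c * (cs.wordProd m')⁻¹ := by
                group
            _ = cs.wordProd (ωy.eraseIdx j) * cs.wordProd m' * cs.simple c
                  * (cs.wordProd m')⁻¹ := by rw [hzd]
            _ = (y * cs.wordProd m' * cs.simple c) * cs.simple c * (cs.wordProd m')⁻¹ := by
                rw [hy₂m]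
            _ = y * cs.wordProd m' * (cs.simple c * cs.simple c) * (cs.wordProd m')⁻¹ := by
                group
            _ = y := by
                rw [cs.simple_mul_simple_self, mul_one, mul_assoc, mul_inv_cancel, mul_one]
        have hlen0 : cs.length y = cs.length z + (red L).length := by
          rw [hym₀]
          exact IH (cs.length z) hzlt z rfl hza hzb (red L) hm₀
        rcases List.eq_nil_or_concat (red L) with hnil | ⟨m₁, e, hcat⟩
        · rw [hnil] at hlen0
          simp at hlen0
          omega
        · have he : e = a ∨ e = b := hm₀.2 e (by rw [hcat]; simp)
          have hm₁ : IsAlt a b m₁ := by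
            rw [hcat] at hm₀
            rw [List.concat_eq_append] at hm₀
            exact ⟨(List.isChain_append.mp hm₀.1).1, fun x hx => hm₀.2 x (by simp [hx])⟩
          have hse : cs.length (y * cs.simple e) = cs.length z + m₁.length := by
            have : y * cs.simple e = z * cs.wordProd m₁ := by
              rw [hym₀, hcat, List.concat_eq_append, cs.wordProd_append,
                cs.wordProd_singleton]
              simp only [mul_assoc]
              rw [cs.simple_mul_simple_self, mul_one]
            rw [this]
            exact IH (cs.length z) hzlt z rfl hza hzb m₁ hm₁
          have hlt : cs.IsRightDescent y e := by
            rw [CoxeterSystem.IsRightDescent, hse, hlen0, hcat, List.concat_eq_append]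
            simp
          rcases he with rfl | rfl
          · exact hda hlt
          · exact hdb hlt
      · -- deletion inside m'
        rw [List.eraseIdx_append_of_length_le hjy, cs.wordProd_append, ← hωy] at hex
        have hkey : cs.wordProd (m' ++ [c]) = cs.wordProd (m'.eraseIdx (j - ωy.length)) := by
          rw [cs.wordProd_append, cs.wordProd_singleton]
          have h8 := hex
          rw [mul_assoc] at h8
          exact mul_left_cancel h8
        have hmem₂ : ∀ x ∈ m'.eraseIdx (j - ωy.length), x = a ∨ x = b := by
          intro x hx
          exact hm'.2 x ((List.eraseIdx_sublist m' (j - ωy.length)).mem hx)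
        have hm₂ : IsAlt a b (red (m'.eraseIdx (j - ωy.length))) := red_isAlt hmem₂
        have hlen2 := alt_length_eq cs hab hnadj halt hm₂
          (by rw [red_wordProd, hkey])
        have hjm : j - ωy.length < m'.length := by
          rw [List.length_append] at hj
          omega
        have h5 : (m'.eraseIdx (j - ωy.length)).length + 1 = m'.length :=
          List.length_eraseIdx_add_one hjm
        have h6 := red_length_le (m'.eraseIdx (j - ωy.length))
        rw [List.length_append, List.length_singleton] at hlen2
        omega

/-- In a RACG, two distinct letters that are both right descents of the same
element must be adjacent in the graph. -/
lemma descents_adj {u : W} {a b : V} (hab : a ≠ b) (ha : cs.IsRightDescent u a)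
    (hb : cs.IsRightDescent u b) : G.Adj a b := by
  by_contra hnadj
  obtain ⟨z, d, hdmem, hdef, hlen, hza, hzb⟩ := strip cs a b (cs.length u) u rfl
  have hm₀ : IsAlt a b (red d) := red_isAlt hdmem
  have hu : u = z * cs.wordProd (red d) := by rw [red_wordProd, hdef]
  have hlen0 : cs.length u = cs.length z + (red d).length := by
    rw [hu]
    exact alt_add cs hab hnadj (cs.length z) z rfl hza hzb (red d) hm₀
  have hends : ∀ e : V, (e = a ∨ e = b) → cs.IsRightDescent u e →
      (red d).getLast? = some e := by
    intro e he hdesc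
    by_contra hlast
    have halt : IsAlt a b (red d ++ [e]) := by
      refine ⟨List.isChain_append.mpr ⟨hm₀.1, List.isChain_singleton e, ?_⟩, ?_⟩
      · intro x hx y hy
        rw [List.head?_cons] at hy
        simp at hy
        subst hy
        intro hcon
        subst hcon
        exact hlast hx
      · intro x hx
        rcases List.mem_append.mp hx with hx | hx
        · exact hm₀.2 x hx
        · simp at hx; subst hx; exact he
    have : cs.length (u * cs.simple e) = cs.length z + ((red d).length + 1) := by
      have h7 : u * cs.simple e = z * cs.wordProd (red d ++ [e]) := by
        rw [hu, cs.wordProd_append, cs.wordProd_singleton, mul_assoc]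
      rw [h7]
      have := alt_add cs hab hnadj (cs.length z) z rfl hza hzb (red d ++ [e]) halt
      rw [this, List.length_append, List.length_singleton]
    rw [CoxeterSystem.IsRightDescent] at hdesc
    omega
  have hea := hends a (Or.inl rfl) ha
  have heb := hends b (Or.inr rfl) hb
  rw [hea] at heb
  exact hab (Option.some_injective _ heb)

end RACGAux

namespace RACGAux

open RACG List CoxeterSystem
open scoped Classical

variable {V : Type*} [DecidableEq V] {G : SimpleGraph V} [DecidableRel G.Adj]
  {W : Type*} [Group W] (cs : CoxeterSystem (racgMatrix G) W)

lemma suppAb_cw_mul_simple {C : Finset V} (hC : (C : Set V).Pairwise G.Adj) {v : V}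
    (hv : v ∉ C) : suppAb cs (cliqueWord cs C * cs.simple v) = insert v C := by
  unfold suppAb
  rw [map_mul, phiAb_simple]
  have h0 : Multiplicative.toAdd (phiAb cs (cliqueWord cs C)
      * Multiplicative.ofAdd (Finsupp.single v (1 : ZMod 2)))
      = Multiplicative.toAdd (phiAb cs (cliqueWord cs C))
        + Finsupp.single v (1 : ZMod 2) := rfl
  have h1 : (Multiplicative.toAdd (phiAb cs (cliqueWord cs C))).support = C :=
    suppAb_cw cs hC
  rw [h0, Finsupp.support_add_eq]
  · rw [h1, Finsupp.support_single_ne_zero v one_ne_zero]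
    ext x; simp [or_comm]
  · rw [h1, Finsupp.support_single_ne_zero v one_ne_zero]
    simpa using hv

/-- Descents of a clique factor survive in a reduced product. -/
lemma bdC {C : Finset V} (hC : (C : Set V).Pairwise G.Adj) {x : W}
    (hx : cs.length (x * cliqueWord cs C) = cs.length x + C.card) {c : V} (hc : c ∈ C) :
    cs.IsRightDescent (x * cliqueWord cs C) c := by
  rw [CoxeterSystem.IsRightDescent, hx, mul_assoc, cw_mul_simple_of_mem cs hC hc]
  calc cs.length (x * cliqueWord cs (C.erase c))
      ≤ cs.length x + cs.length (cliqueWord cs (C.erase c)) := cs.length_mul_le _ _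
    _ = cs.length x + (C.card - 1) := by
        rw [cw_length cs (hC.mono (by intro y hy; simp at hy ⊢; tauto)),
          Finset.card_erase_of_mem hc]
    _ < cs.length x + C.card := by
        have : 0 < C.card := Finset.card_pos.mpr ⟨c, hc⟩
        omega

/-- Peeling one descent off the left factor. -/
lemma peel_one {C : Finset V} (hC : (C : Set V).Pairwise G.Adj) {x : W}
    (hx : cs.length (x * cliqueWord cs C) = cs.length x + C.card) {v : V} (hv : v ∉ C)
    (hd : cs.IsRightDescent (x * cliqueWord cs C) v) :
    (∀ c ∈ C, G.Adj v c) ∧ cs.length (x * cs.simple v) + 1 = cs.length x ∧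
      cs.length (x * cs.simple v * cliqueWord cs C)
        = cs.length (x * cs.simple v) + C.card := by
  have hadj : ∀ c ∈ C, G.Adj v c := by
    intro c hc
    exact descents_adj cs (fun h => hv (h ▸ hc)) hd (bdC cs hC hx hc)
  have hcomm : Commute (cs.simple v) (cliqueWord cs C) :=
    cw_commute cs hC (fun c hc => Or.inr (hadj c hc))
  obtain ⟨lC, hlClen, hlCprod, hlCmem⟩ := cw_word cs hC
  obtain ⟨ωx, hωxlen, hωx⟩ := cs.exists_reduced_word x
  replace hωxlen : ωx.length = cs.length x := by rw [hωx]; exact hωxlen.eq.symm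
  have hΩlen : (ωx ++ lC).length = cs.length (x * cliqueWord cs C) := by
    rw [List.length_append, hωxlen, hlClen, hx]
  have hΩprod : x * cliqueWord cs C = cs.wordProd (ωx ++ lC) := by
    rw [cs.wordProd_append, ← hωx, ← hlCprod]
  obtain ⟨j, hj, hex⟩ := exchange cs hd hΩlen hΩprod
  rcases Nat.lt_or_ge j ωx.length with hjx | hjx
  · -- deletion on the x side
    rw [List.eraseIdx_append_of_lt_length hjx, cs.wordProd_append, ← hlCprod] at hex
    have hxv : x * cs.simple v = cs.wordProd (ωx.eraseIdx j) := by
      have h2 : x * cliqueWord cs C * cs.simple v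
          = x * cs.simple v * cliqueWord cs C := by
        rw [mul_assoc, ← hcomm.eq, ← mul_assoc]
      rw [h2] at hex
      exact mul_right_cancel hex
    have h3 : cs.length (x * cs.simple v) + 1 = cs.length x := by
      have h4 := cs.length_wordProd_le (ωx.eraseIdx j)
      have h5 := List.length_eraseIdx_add_one hjx
      rcases cs.length_mul_simple x v with h6 | h6
      · exfalso; rw [hxv] at h6; omega
      · exact h6
    refine ⟨hadj, h3, ?_⟩
    have h7 : x * cs.simple v * cliqueWord cs C = x * cliqueWord cs C * cs.simple v := by
      rw [mul_assoc, hcomm.eq, ← mul_assoc]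
    rw [h7]
    have h8 := descent_length cs hd
    omega
  · -- deletion on the clique side: impossible
    exfalso
    rw [List.eraseIdx_append_of_length_le hjx, cs.wordProd_append, ← hωx] at hex
    have hkey : cliqueWord cs C * cs.simple v
        = cs.wordProd (lC.eraseIdx (j - ωx.length)) := by
      have h8 := hex
      rw [mul_assoc] at h8
      exact mul_left_cancel h8
    have h9 : C.card + 1 ≤ cs.length (cliqueWord cs C * cs.simple v) := by
      have := suppAb_le_length cs (cliqueWord cs C * cs.simple v)
      rw [suppAb_cw_mul_simple cs hC hv, Finset.card_insert_of_notMem hv] at this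
      omega
    have h10 : cs.length (cliqueWord cs C * cs.simple v)
        ≤ (lC.eraseIdx (j - ωx.length)).length := by
      rw [hkey]; exact cs.length_wordProd_le _
    have hjl : j - ωx.length < lC.length := by
      rw [List.length_append] at hj
      omega
    have h11 := List.length_eraseIdx_add_one hjl
    omega

/-- Peeling a whole set of descents. -/
lemma peel {C : Finset V} (hC : (C : Set V).Pairwise G.Adj) :
    ∀ (k : ℕ) (A : Finset V) (x : W), A.card = k → Disjoint A C →
      (A : Set V).Pairwise G.Adj →
      (∀ v ∈ A, cs.IsRightDescent (x * cliqueWord cs C) v) →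
      cs.length (x * cliqueWord cs C) = cs.length x + C.card →
      cs.length (x * cliqueWord cs A) + A.card = cs.length x ∧
        cs.length (x * cliqueWord cs A * cliqueWord cs C)
          = cs.length (x * cliqueWord cs A) + C.card := by
  intro k
  induction k with
  | zero =>
    intro A x hcard _ _ _ hx
    have hA : A = ∅ := Finset.card_eq_zero.mp hcard
    subst hA
    rw [cw_empty, mul_one]
    exact ⟨by simp, hx⟩
  | succ k IH =>
    intro A x hcard hdisj hAclique hAdesc hx
    have hne : A.Nonempty := Finset.card_pos.mp (by omega)
    obtain ⟨v, hv⟩ := hne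
    have hvC : v ∉ C := fun hvc => (Finset.disjoint_left.mp hdisj hv) hvc
    obtain ⟨hadj, hxv, hxvC⟩ := peel_one cs hC hx hvC (hAdesc v hv)
    have hcomm : Commute (cs.simple v) (cliqueWord cs C) :=
      cw_commute cs hC (fun c hc => Or.inr (hadj c hc))
    have hAe : (A.erase v : Set V).Pairwise G.Adj :=
      hAclique.mono (by intro y hy; simp at hy ⊢; tauto)
    have hAedesc : ∀ u ∈ A.erase v,
        cs.IsRightDescent (x * cs.simple v * cliqueWord cs C) u := by
      intro u hu
      have huv : u ≠ v := Finset.ne_of_mem_erase hu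
      have hud : cs.IsRightDescent (x * cliqueWord cs C) u :=
        hAdesc u (Finset.mem_of_mem_erase hu)
      have h3 : x * cs.simple v * cliqueWord cs C
          = x * cliqueWord cs C * cs.simple v := by
        rw [mul_assoc, hcomm.eq, ← mul_assoc]
      rw [CoxeterSystem.IsRightDescent, h3]
      have h4 := two_descents cs huv hud (hAdesc v hv)
      have h5 := descent_length cs (hAdesc v hv)
      omega
    have hxvC' : cs.length (x * cs.simple v * cliqueWord cs C)
        = cs.length (x * cs.simple v) + C.card := hxvC
    have hdisjE : Disjoint (A.erase v) C := Finset.disjoint_of_subset_left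
      (Finset.erase_subset v A) hdisj
    obtain ⟨p1, p2⟩ := IH (A.erase v) (x * cs.simple v)
      (by rw [Finset.card_erase_of_mem hv]; omega) hdisjE hAe hAedesc hxvC'
    have hcwA : cliqueWord cs A = cs.simple v * cliqueWord cs (A.erase v) := by
      have hins : (((insert v (A.erase v)) : Finset V) : Set V).Pairwise G.Adj := by
        rw [Finset.insert_erase hv]; exact hAclique
      conv_lhs => rw [← Finset.insert_erase hv]
      exact cw_insert cs (Finset.notMem_erase v A) hins
    have hxA : x * cliqueWord cs A = x * cs.simple v * cliqueWord cs (A.erase v) := by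
      rw [hcwA, ← mul_assoc]
    constructor
    · rw [hxA]
      rw [Finset.card_erase_of_mem hv] at p1
      omega
    · rw [hxA]
      exact p2

/-- The set of right descents is finite. -/
lemma descent_finite (u : W) : {v : V | cs.IsRightDescent u v}.Finite := by
  obtain ⟨ω, hlen, hw⟩ := cs.exists_reduced_word u
  replace hlen : ω.length = cs.length u := by rw [hw]; exact hlen.eq.symm
  have hsub : {v : V | cs.IsRightDescent u v} ⊆ cs.simple ⁻¹' {w | w ∈ cs.rightInvSeq ω} := by
    intro v hv
    have h1 : nu cs u (cs.simple v) = 1 :=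
      descent_nu cs (cs.isReflection_simple v) hv
    rw [hw, nu_word] at h1
    exact cnt_one_mem h1
  exact Set.Finite.subset (Set.Finite.preimage
    ((simple_injective cs).injOn) (cs.rightInvSeq ω).finite_toSet) hsub

end RACGAux

namespace RACGAux

open RACG List CoxeterSystem
open scoped Classical

variable {V : Type*} [DecidableEq V] {G : SimpleGraph V} [DecidableRel G.Adj]
  {W : Type*} [Group W] (cs : CoxeterSystem (racgMatrix G) W)

/-- Main structural lemma for one side. -/
lemma side {C : Finset V} (hC : (C : Set V).Pairwise G.Adj) {x : W}
    (hx : cs.length (x * cliqueWord cs C) = cs.length x + C.card) :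
    ∃ A : Finset V, Disjoint A C ∧ (((A ∪ C : Finset V)) : Set V).Pairwise G.Adj ∧
      (∀ v, cs.IsRightDescent (x * cliqueWord cs C) v ↔ v ∈ A ∪ C) ∧
      cs.length (x * cliqueWord cs A) + A.card = cs.length x := by
  set D := (descent_finite cs (x * cliqueWord cs C)).toFinset with hD
  refine ⟨D \ C, Finset.sdiff_disjoint, ?_, ?_, ?_⟩
  · -- clique
    intro p hp q hq hpq
    simp only [Finset.coe_union, Set.mem_union, Finset.mem_coe, Finset.mem_sdiff] at hp hq
    have hpd : cs.IsRightDescent (x * cliqueWord cs C) p := by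
      rcases hp with ⟨hp1, -⟩ | hp1
      · rw [hD, Set.Finite.mem_toFinset] at hp1; exact hp1
      · exact bdC cs hC hx hp1
    have hqd : cs.IsRightDescent (x * cliqueWord cs C) q := by
      rcases hq with ⟨hq1, -⟩ | hq1
      · rw [hD, Set.Finite.mem_toFinset] at hq1; exact hq1
      · exact bdC cs hC hx hq1
    exact descents_adj cs hpq hpd hqd
  · -- descent set identification
    intro v
    constructor
    · intro hd
      by_cases hvC : v ∈ C
      · exact Finset.mem_union_right _ hvC
      · refine Finset.mem_union_left _ (Finset.mem_sdiff.mpr ⟨?_, hvC⟩)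
        rw [hD, Set.Finite.mem_toFinset]
        exact hd
    · intro hv
      rcases Finset.mem_union.mp hv with hv | hv
      · have := (Finset.mem_sdiff.mp hv).1
        rw [hD, Set.Finite.mem_toFinset] at this
        exact this
      · exact bdC cs hC hx hv
  · -- peel
    have hclD : ((D \ C : Finset V) : Set V).Pairwise G.Adj := by
      intro p hp q hq hpq
      simp only [Finset.coe_sdiff, Set.mem_diff, Finset.mem_coe, Finset.mem_sdiff] at hp hq
      have hpd : cs.IsRightDescent (x * cliqueWord cs C) p := by
        have := hp.1
        rwa [hD, Set.Finite.mem_toFinset] at this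
      have hqd : cs.IsRightDescent (x * cliqueWord cs C) q := by
        have := hq.1
        rwa [hD, Set.Finite.mem_toFinset] at this
      exact descents_adj cs hpq hpd hqd
    have hdescD : ∀ v ∈ D \ C, cs.IsRightDescent (x * cliqueWord cs C) v := by
      intro v hv
      have := (Finset.mem_sdiff.mp hv).1
      rwa [hD, Set.Finite.mem_toFinset] at this
    exact (peel cs hC (D \ C).card (D \ C) x rfl Finset.sdiff_disjoint hclD hdescD hx).1

end RACGAux

theorem S_eq_union_SRho
    {V : Type*} [DecidableEq V] (G : SimpleGraph V) [DecidableRel G.Adj]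
    {W : Type*} [Group W] (cs : CoxeterSystem (RACG.racgMatrix G) W)
    (w w₁ w₂ w₃ : W)
    (h : RACG.MemS cs w w₁ w₂ w₃) :
    ∃ (nl nr : ℕ) (ul ur t : W), RACG.MemT cs ul ur t ∧
      nl + cs.length ul + cs.length t + cs.length ur + nr = cs.length w ∧
      RACG.MemSRho cs w nl nr ul ur t w₁ w₂ w₃ := by
  classical
  open RACG RACGAux in
  obtain ⟨hprod, hlen, hcw⟩ := h
  obtain ⟨C, hC, hw2⟩ := hcw
  have hlen2 : cs.length w₂ = C.card := by rw [hw2]; exact cw_length cs hC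
  have h12 : cs.length (w₁ * w₂) = cs.length w₁ + cs.length w₂ := by
    have hle := cs.length_mul_le w₁ w₂
    have hge := cs.length_mul_le (w₁ * w₂) w₃
    rw [hprod] at hge
    omega
  have h23 : cs.length (w₂ * w₃) = cs.length w₂ + cs.length w₃ := by
    have hle := cs.length_mul_le w₂ w₃
    have hge := cs.length_mul_le w₁ (w₂ * w₃)
    rw [← mul_assoc, hprod] at hge
    omega
  -- left side
  have hxl : cs.length (w₁ * cliqueWord cs C) = cs.length w₁ + C.card := by
    rw [← hw2]; rw [h12, hlen2]
  obtain ⟨A, hAdisj, hACclique, hAdesc, hA1⟩ := side cs hC hxl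
  -- right side
  have hw2inv : w₂⁻¹ = w₂ := by rw [hw2]; exact cw_inv cs hC
  have hxr : cs.length (w₃⁻¹ * cliqueWord cs C) = cs.length w₃⁻¹ + C.card := by
    have he : w₃⁻¹ * cliqueWord cs C = (w₂ * w₃)⁻¹ := by
      rw [mul_inv_rev, hw2inv, hw2]
    rw [he, cs.length_inv, cs.length_inv, h23, hlen2]
    omega
  obtain ⟨B, hBdisj, hBCclique, hBdesc, hB1⟩ := side cs hC hxr
  -- abbreviations and basic facts
  have hAclique : (A : Set V).Pairwise G.Adj :=
    hACclique.mono (by intro y hy; simp at hy ⊢; tauto)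
  have hBclique : (B : Set V).Pairwise G.Adj :=
    hBCclique.mono (by intro y hy; simp at hy ⊢; tauto)
  have hCBclique : (((C ∪ B : Finset V)) : Set V).Pairwise G.Adj := by
    have : ((C ∪ B : Finset V) : Set V) = ((B ∪ C : Finset V) : Set V) := by
      rw [Finset.union_comm]
    rw [this]
    exact hBCclique
  have hA2 : cliqueWord cs A * cliqueWord cs A = 1 := cw_mul_self cs hAclique
  have hB2 : cliqueWord cs B * cliqueWord cs B = 1 := cw_mul_self cs hBclique
  have lA : cs.length (cliqueWord cs A) = A.card := cw_length cs hAclique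
  have lB : cs.length (cliqueWord cs B) = B.card := cw_length cs hBclique
  have culAC : cliqueWord cs A * w₂ = cliqueWord cs (A ∪ C) := by
    rw [hw2]; exact (cw_union cs hAdisj hACclique).symm
  have curBC : cliqueWord cs B * w₂ = cliqueWord cs (B ∪ C) := by
    rw [hw2]; exact (cw_union cs hBdisj hBCclique).symm
  have cu2CB : w₂ * cliqueWord cs B = cliqueWord cs (C ∪ B) := by
    rw [hw2]; exact (cw_union cs hBdisj.symm hCBclique).symm
  have lAC : cs.length (cliqueWord cs (A ∪ C)) = A.card + C.card := by
    rw [cw_length cs hACclique, Finset.card_union_of_disjoint hAdisj]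
  have lBC : cs.length (cliqueWord cs (B ∪ C)) = B.card + C.card := by
    rw [cw_length cs hBCclique, Finset.card_union_of_disjoint hBdisj]
  have hvl_ult : (w₁ * cliqueWord cs A) * (cliqueWord cs A * w₂) = w₁ * w₂ := by
    calc (w₁ * cliqueWord cs A) * (cliqueWord cs A * w₂)
        = w₁ * (cliqueWord cs A * cliqueWord cs A) * w₂ := by group
      _ = w₁ * w₂ := by rw [hA2, mul_one]
  have hvr_urt : (w₃⁻¹ * cliqueWord cs B) * (cliqueWord cs B * w₂) = w₃⁻¹ * w₂ := by
    calc (w₃⁻¹ * cliqueWord cs B) * (cliqueWord cs B * w₂)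
        = w₃⁻¹ * (cliqueWord cs B * cliqueWord cs B) * w₂ := by group
      _ = w₃⁻¹ * w₂ := by rw [hB2, mul_one]
  have hvrinv : (w₃⁻¹ * cliqueWord cs B)⁻¹ = cliqueWord cs B * w₃ := by
    rw [mul_inv_rev, cw_inv cs hBclique, inv_inv]
  have hwdecomp : (w₁ * cliqueWord cs A)
      * (cliqueWord cs A * w₂ * cliqueWord cs B)
      * (cliqueWord cs B * w₃) = w := by
    calc (w₁ * cliqueWord cs A) * (cliqueWord cs A * w₂ * cliqueWord cs B)
          * (cliqueWord cs B * w₃)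
        = w₁ * (cliqueWord cs A * cliqueWord cs A) * w₂
            * (cliqueWord cs B * cliqueWord cs B) * w₃ := by group
      _ = w₁ * w₂ * w₃ := by rw [hA2, hB2, mul_one, mul_one]
      _ = w := hprod
  have hmidlen : cs.length (cliqueWord cs A * w₂ * cliqueWord cs B)
      = A.card + C.card + B.card := by
    have hub1 := cs.length_mul_le (cliqueWord cs A * w₂) (cliqueWord cs B)
    have hub2 := cs.length_mul_le (cliqueWord cs A) w₂
    have hlb1 := cs.length_mul_le ((w₁ * cliqueWord cs A)
      * (cliqueWord cs A * w₂ * cliqueWord cs B)) (cliqueWord cs B * w₃)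
    have hlb2 := cs.length_mul_le (w₁ * cliqueWord cs A)
      (cliqueWord cs A * w₂ * cliqueWord cs B)
    have hlb3 := cs.length_mul_le (cliqueWord cs B) w₃
    rw [hwdecomp] at hlb1
    have hlinv : cs.length w₃⁻¹ = cs.length w₃ := cs.length_inv w₃
    have hlb3' : cs.length (cliqueWord cs B * w₃)
        = cs.length (w₃⁻¹ * cliqueWord cs B) := by
      rw [← hvrinv, cs.length_inv]
    omega
  refine ⟨cs.length (w₁ * cliqueWord cs A), cs.length (w₃⁻¹ * cliqueWord cs B),
    cliqueWord cs A, cliqueWord cs B, w₂, ⟨?_, ?_, ?_⟩, ?_, ?_⟩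
  · exact ⟨A ∪ C, hACclique, culAC⟩
  · exact ⟨C ∪ B, hCBclique, cu2CB⟩
  · rw [hmidlen, lA, lB, hlen2]
  · have hlinv : cs.length w₃⁻¹ = cs.length w₃ := cs.length_inv w₃
    rw [lA, lB, hlen2]
    omega
  · refine ⟨⟨hprod, hlen, ⟨C, hC, hw2⟩⟩, rfl, w₁ * cliqueWord cs A, ⟨rfl, ?_, ?_⟩,
      w₃⁻¹ * cliqueWord cs B, ⟨rfl, ?_, ?_⟩, ?_, ?_⟩
    · -- length additivity left
      rw [hvl_ult, culAC, lAC, h12, hlen2]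
      omega
    · -- descents left
      intro v
      rw [hvl_ult, culAC]
      have hd1 : cs.IsRightDescent (w₁ * w₂) v ↔ v ∈ A ∪ C := by
        rw [hw2]; exact hAdesc v
      have hd2 : cs.IsRightDescent (cliqueWord cs (A ∪ C)) v ↔ v ∈ A ∪ C :=
        cw_descent_iff cs hACclique v
      rw [hd1, hd2]
    · -- length additivity right
      rw [hvr_urt, curBC, lBC]
      have he : w₃⁻¹ * w₂ = (w₂ * w₃)⁻¹ := by rw [mul_inv_rev, hw2inv]
      rw [he, cs.length_inv, h23, hlen2]
      have hlinv : cs.length w₃⁻¹ = cs.length w₃ := cs.length_inv w₃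
      omega
    · -- descents right
      intro v
      rw [hvr_urt, curBC]
      have hd1 : cs.IsRightDescent (w₃⁻¹ * w₂) v ↔ v ∈ B ∪ C := by
        rw [hw2]; exact hBdesc v
      have hd2 : cs.IsRightDescent (cliqueWord cs (B ∪ C)) v ↔ v ∈ B ∪ C :=
        cw_descent_iff cs hBCclique v
      rw [hd1, hd2]
    · -- w₁ = vl * ul
      rw [mul_assoc, hA2, mul_one]
    · -- w₃ = ur⁻¹ * vr⁻¹
      rw [hvrinv, cw_inv cs hBclique, ← mul_assoc, hB2, one_mul]
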